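/- For every measurable function E : Z^{n+1} → [0,∞], the function E^X := E/E^i (with the convention 0/0 := 1) is an exchangeability e-variable. -/

import Mathlib

open MeasureTheory ProbabilityTheory
open scoped ENNReal NNReal

noncomputable section

/-- `E` is a *randomness e-variable*: a measurable nonnegative function on `Z^{n+1}` whose
integral is at most 1 under every product (IID) probability measure `Q^{n+1}`. -/
def IsRandE {Z : Type*} [MeasurableSpace Z] (n : ℕ) (E : (Fin (n+1) → Z) → ℝ≥0∞) : Prop :=
  Measurable E ∧
    ∀ (Q : Measure Z), IsProbabilityMeasure Q →
      ∫⁻ z, E z ∂(Measure.pi fun _ : Fin (n+1) => Q) ≤ 1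

/-- A probability measure on `Z^{n+1}` is *exchangeable* if it is invariant under all
permutations of the `n+1` coordinates. -/
def IsExchangeable {Z : Type*} [MeasurableSpace Z] (n : ℕ)
    (R : Measure (Fin (n+1) → Z)) : Prop :=
  ∀ π : Equiv.Perm (Fin (n+1)), Measure.map (fun z i => z (π i)) R = R

/-- `E` is an *exchangeability e-variable*: its integral is at most 1 under every
exchangeable probability measure on `Z^{n+1}`. -/
def IsExchE {Z : Type*} [MeasurableSpace Z] (n : ℕ) (E : (Fin (n+1) → Z) → ℝ≥0∞) : Prop :=
  Measurable E ∧
    ∀ (R : Measure (Fin (n+1) → Z)), IsProbabilityMeasure R → IsExchangeable n R →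
      ∫⁻ z, E z ∂ R ≤ 1

/-- A function on `Z^{n+1}` is *train-invariant* if it is invariant under permutations of the
first `n` (training) examples. -/
def TrainInv {Z α : Type*} (n : ℕ) (E : (Fin (n+1) → Z) → α) : Prop :=
  ∀ (z : Fin (n+1) → Z) (σ : Equiv.Perm (Fin n)),
    E (Fin.snoc (fun i => z (Fin.castSucc (σ i))) (z (Fin.last n))) = E z

/-- `E^i`: the average of `E` over all permutations of the `n+1` examples. -/
def Ei {Z : Type*} (n : ℕ) (E : (Fin (n+1) → Z) → ℝ≥0∞) : (Fin (n+1) → Z) → ℝ≥0∞ :=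
  fun z => (∑ π : Equiv.Perm (Fin (n+1)), E (fun i => z (π i))) / (Nat.factorial (n+1) : ℝ≥0∞)

/-- `E^X := E / E^i`, with the convention `0/0 := 1`. -/
def EX {Z : Type*} (n : ℕ) (E : (Fin (n+1) → Z) → ℝ≥0∞) : (Fin (n+1) → Z) → ℝ≥0∞ :=
  fun z => if E z = 0 ∧ Ei n E z = 0 then 1 else E z / Ei n E z

/-- `E^t`: the average of `E` over all permutations of the `n` training examples. -/
def Et {Z : Type*} (n : ℕ) (E : (Fin (n+1) → Z) → ℝ≥0∞) : (Fin (n+1) → Z) → ℝ≥0∞ :=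
  fun z => (∑ σ : Equiv.Perm (Fin n),
      E (Fin.snoc (fun i => z (Fin.castSucc (σ i))) (z (Fin.last n)))) / (Nat.factorial n : ℝ≥0∞)

/-- Replace the label of the test (last) example by `y`, keeping the training examples and the
test object: this is `(z_1, …, z_n, (x_{n+1}, y))`. -/
def withLabel {X Y : Type*} (n : ℕ) (z : Fin (n+1) → X × Y) (y : Y) : Fin (n+1) → X × Y :=
  Fin.snoc (fun i : Fin n => z (Fin.castSucc i)) ((z (Fin.last n)).1, y)


lemma Ei_perm {Z : Type*} (n : ℕ) (E : (Fin (n+1) → Z) → ℝ≥0∞) (z : Fin (n+1) → Z)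
    (π : Equiv.Perm (Fin (n+1))) : Ei n E (fun i => z (π i)) = Ei n E z := by
  unfold Ei
  congr 1
  exact Fintype.sum_equiv (Equiv.mulLeft π) _ _ (fun σ => rfl)

lemma Ei_meas {Z : Type*} [MeasurableSpace Z] (n : ℕ) (E : (Fin (n+1) → Z) → ℝ≥0∞)
    (hE : Measurable E) : Measurable (Ei n E) := by
  unfold Ei
  apply Measurable.div _ measurable_const
  exact Finset.measurable_sum _ fun π _ =>
    hE.comp (measurable_pi_lambda _ fun i => measurable_pi_apply (π i))

lemma EX_meas {Z : Type*} [MeasurableSpace Z] (n : ℕ) (E : (Fin (n+1) → Z) → ℝ≥0∞)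
    (hE : Measurable E) : Measurable (EX n E) := by
  unfold EX
  apply Measurable.ite _ measurable_const (hE.div (Ei_meas n E hE))
  exact MeasurableSet.inter (hE measurableSet_eq) ((Ei_meas n E hE) measurableSet_eq)

lemma sum_EX_le {Z : Type*} (n : ℕ) (E : (Fin (n+1) → Z) → ℝ≥0∞) (z : Fin (n+1) → Z) :
    ∑ π : Equiv.Perm (Fin (n+1)), EX n E (fun i => z (π i)) ≤ ((n+1).factorial : ℝ≥0∞) := by
  classical
  set c : ℝ≥0∞ := ((n+1).factorial : ℝ≥0∞) with hc
  have hc0 : c ≠ 0 := by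
    simp [hc, Nat.factorial_ne_zero]
  have hct : c ≠ ∞ := ENNReal.natCast_ne_top _
  set S : ℝ≥0∞ := ∑ π : Equiv.Perm (Fin (n+1)), E (fun i => z (π i)) with hS
  have hEiz : Ei n E z = S / c := rfl
  by_cases h0 : Ei n E z = 0
  · have hS0 : S = 0 := by
      rw [hEiz, ENNReal.div_eq_zero_iff] at h0
      tauto
    have hterm : ∀ π : Equiv.Perm (Fin (n+1)), E (fun i => z (π i)) = 0 := by
      intro π
      have := Finset.sum_eq_zero_iff.mp hS0.symm.symm
      exact (Finset.sum_eq_zero_iff.mp hS0) π (Finset.mem_univ π)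
    have : ∀ π : Equiv.Perm (Fin (n+1)), EX n E (fun i => z (π i)) = 1 := by
      intro π
      unfold EX
      rw [if_pos ⟨hterm π, by rw [Ei_perm n E z π]; exact h0⟩]
    rw [Finset.sum_congr rfl (fun π _ => this π), Finset.sum_const, nsmul_eq_mul, mul_one]
    simp [hc, Fintype.card_perm]
  · have hterm : ∀ π : Equiv.Perm (Fin (n+1)),
        EX n E (fun i => z (π i)) = E (fun i => z (π i)) / Ei n E z := by
      intro π
      unfold EX
      rw [Ei_perm n E z π, if_neg (by tauto)]
    rw [Finset.sum_congr rfl (fun π _ => hterm π)]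
    have hsum : ∑ π : Equiv.Perm (Fin (n+1)), E (fun i => z (π i)) / Ei n E z
        = S / Ei n E z := by
      simp only [div_eq_mul_inv, ← Finset.sum_mul, hS]
    rw [hsum]
    rw [ENNReal.div_le_iff_le_mul (Or.inl h0) (Or.inr hc0)]
    have : S = Ei n E z * c := by
      rw [hEiz, ENNReal.div_mul_cancel hc0 hct]
    rw [this, mul_comm]

/-- For every measurable `E : Z^{n+1} → [0,∞]`, the function `E^X := E/E^i`
(with `0/0 := 1`) is an exchangeability e-variable. -/
theorem stmt10 {Z : Type*} [MeasurableSpace Z] (n : ℕ) (hn : 1 ≤ n)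
    (E : (Fin (n+1) → Z) → ℝ≥0∞) (hE : Measurable E) :
    IsExchE n (EX n E) := by
  classical
  refine ⟨EX_meas n E hE, fun R hR hRex => ?_⟩
  set c : ℝ≥0∞ := ((n+1).factorial : ℝ≥0∞) with hc
  have hc0 : c ≠ 0 := by simp [hc, Nat.factorial_ne_zero]
  have hct : c ≠ ∞ := ENNReal.natCast_ne_top _
  have hmeasπ : ∀ π : Equiv.Perm (Fin (n+1)),
      Measurable (fun z : Fin (n+1) → Z => fun i => z (π i)) :=
    fun π => measurable_pi_lambda _ fun i => measurable_pi_apply (π i)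
  have hint : ∀ π : Equiv.Perm (Fin (n+1)),
      ∫⁻ z, EX n E z ∂ R = ∫⁻ z, EX n E (fun i => z (π i)) ∂ R := by
    intro π
    conv_lhs => rw [← hRex π]
    rw [lintegral_map (EX_meas n E hE) (hmeasπ π)]
  have key : c * ∫⁻ z, EX n E z ∂ R ≤ c := by
    calc c * ∫⁻ z, EX n E z ∂ R
        = ∑ π : Equiv.Perm (Fin (n+1)), ∫⁻ z, EX n E (fun i => z (π i)) ∂ R := by
          rw [Finset.sum_congr rfl (fun π _ => (hint π).symm), Finset.sum_const]
          simp [hc, Fintype.card_perm, nsmul_eq_mul]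
      _ = ∫⁻ z, ∑ π : Equiv.Perm (Fin (n+1)), EX n E (fun i => z (π i)) ∂ R := by
          rw [lintegral_finset_sum]
          exact fun π _ => (EX_meas n E hE).comp (hmeasπ π)
      _ ≤ ∫⁻ _, c ∂ R := lintegral_mono fun z => sum_EX_le n E z
      _ = c := by simp [lintegral_const]
  calc ∫⁻ z, EX n E z ∂ R = c⁻¹ * (c * ∫⁻ z, EX n E z ∂ R) := by
        rw [← mul_assoc, ENNReal.inv_mul_cancel hc0 hct, one_mul]
    _ ≤ c⁻¹ * c := mul_le_mul_right key _
    _ = 1 := ENNReal.inv_mul_cancel hc0 hct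

end
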